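/- Let G be a graph, r' ≥ 5 an integer, and let Y ⊆ V(G) be maximally r'-discrete. Set s := ⌊2r'/5⌋ and L := N_s[Y]. Then every connected component of the induced subgraph G↾L equals N_s[y] for a unique y ∈ Y, has diameter at most 4r'/5, and any two distinct components of G↾L are at graph distance at least r'/5 from each other. -/

import Mathlib

section aux
variable {V : Type*} (G : SimpleGraph V)

/-- Ball connectivity: any vertex within distance `s` of `y` is connected to `y`
inside the induced subgraph on `L`, provided the ball around `y` lies in `L`. -/
lemma aux_ball_reachable {L : Set V} {s : ℕ} {y : V} (hyL : y ∈ L)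
    (hball : ∀ w : V, G.edist w y ≤ (s : ℕ∞) → w ∈ L) :
    ∀ (n : ℕ) (w : V), G.edist w y ≤ (n : ℕ∞) → n ≤ s →
      ∃ hw : w ∈ L, (G.induce L).Reachable ⟨w, hw⟩ ⟨y, hyL⟩ := by
  intro n
  induction n with
  | zero =>
    intro w hw _
    have hw0 : G.edist w y = 0 := le_antisymm (by exact_mod_cast hw) zero_le
    rw [SimpleGraph.edist_eq_zero_iff] at hw0
    subst hw0
    exact ⟨hyL, SimpleGraph.Reachable.refl _⟩
  | succ k ih =>
    intro w hw hks
    have hwL : w ∈ L := hball w (hw.trans (by exact_mod_cast Nat.cast_le.mpr hks))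
    have hx : ((k : ℕ∞) + 1) ≠ ⊤ := by exact_mod_cast (ENat.coe_ne_top (k + 1))
    have hfin : G.edist w y ≠ ⊤ := ne_top_of_le_ne_top hx hw
    obtain ⟨p, hp⟩ := SimpleGraph.exists_walk_of_edist_ne_top hfin
    cases p with
    | nil => exact ⟨hyL, SimpleGraph.Reachable.refl _⟩
    | @cons _ u _ hadj q =>
      have hql : ((q.length : ℕ) : ℕ∞) + 1 ≤ ((k : ℕ) : ℕ∞) + 1 := by
        calc ((q.length : ℕ) : ℕ∞) + 1
            = (((SimpleGraph.Walk.cons hadj q).length : ℕ) : ℕ∞) := by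
              simp [SimpleGraph.Walk.length_cons]
          _ = G.edist w y := hp
          _ ≤ ((k : ℕ) : ℕ∞) + 1 := by exact_mod_cast hw
      have hqk1 : q.length + 1 ≤ k + 1 := by exact_mod_cast hql
      have hqk : q.length ≤ k := by omega
      have hu : G.edist u y ≤ (k : ℕ∞) :=
        (SimpleGraph.edist_le q).trans (by exact_mod_cast Nat.cast_le.mpr hqk)
      obtain ⟨huL, hru⟩ := ih u hu (Nat.le_of_succ_le hks)
      refine ⟨hwL, SimpleGraph.Reachable.trans ?_ hru⟩
      exact SimpleGraph.Adj.reachable (show (G.induce L).Adj ⟨w, hwL⟩ ⟨u, huL⟩ from hadj)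
end aux

theorem neighborhood_of_discrete_components {V : Type*} (G : SimpleGraph V)
    (r' : ℕ) (hr' : 5 ≤ r')
    (Y : Set V)
    (hdisc : ∀ x ∈ Y, ∀ y ∈ Y, x ≠ y → ((r' : ℕ) : ℕ∞) < G.edist x y)
    (hmax : ∀ v : V, ∃ y ∈ Y, G.edist v y ≤ (r' : ℕ∞))
    (s : ℕ) (hs : s = 2 * r' / 5)
    (L : Set V) (hL : L = {v : V | ∃ y ∈ Y, G.edist v y ≤ (s : ℕ∞)}) :
    (∀ v : V, ∀ hv : v ∈ L,
      ∃! y : V, y ∈ Y ∧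
        {w : V | ∃ hw : w ∈ L, (G.induce L).Reachable ⟨v, hv⟩ ⟨w, hw⟩}
          = {w : V | G.edist w y ≤ (s : ℕ∞)}) ∧
    (∀ v w : ↥L, (G.induce L).Reachable v w →
      5 * G.edist (v : V) (w : V) ≤ ((4 * r' : ℕ) : ℕ∞)) ∧
    (∀ v w : ↥L, ¬ (G.induce L).Reachable v w →
      ((r' : ℕ) : ℕ∞) ≤ 5 * G.edist (v : V) (w : V)) := by
  have h5s : 5 * s ≤ 2 * r' := by
    have := Nat.div_mul_le_self (2 * r') 5
    omega
  have h2s1 : 2 * s + 1 ≤ r' := by omega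
  -- membership in L from being in a ball
  have hmem : ∀ w y, y ∈ Y → G.edist w y ≤ (s : ℕ∞) → w ∈ L := by
    intro w y hy h; rw [hL]; exact ⟨y, hy, h⟩
  -- every point of L has a center
  have hctr : ∀ w, w ∈ L → ∃ y ∈ Y, G.edist w y ≤ (s : ℕ∞) := by
    intro w hw; rw [hL] at hw; exact hw
  -- centers at distance ≤ 2s+1 are equal
  have hceq : ∀ y, y ∈ Y → ∀ y', y' ∈ Y →
      G.edist y y' ≤ ((2 * s + 1 : ℕ) : ℕ∞) → y = y' := by
    intro y hy y' hy' h
    by_contra hne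
    have h1 := hdisc y hy y' hy' hne
    have h2 : ((2 * s + 1 : ℕ) : ℕ∞) ≤ ((r' : ℕ) : ℕ∞) := Nat.cast_le.mpr h2s1
    exact absurd (h.trans h2) h1.not_ge
  -- balls are closed under reachability in the induced graph
  have hclosed : ∀ y, y ∈ Y → ∀ {a b : ↥L} (p : (G.induce L).Walk a b),
      G.edist (a : V) y ≤ (s : ℕ∞) → G.edist (b : V) y ≤ (s : ℕ∞) := by
    intro y hy a b p
    induction p with
    | nil => exact id
    | @cons a c b h q ih =>
      intro ha
      apply ih
      obtain ⟨y', hy', hcy'⟩ := hctr (c : V) c.2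
      have hadj : G.Adj (a : V) (c : V) := h
      have htri : G.edist y y' ≤ ((2 * s + 1 : ℕ) : ℕ∞) := by
        calc G.edist y y' ≤ G.edist y (c : V) + G.edist (c : V) y' :=
              SimpleGraph.edist_triangle
          _ ≤ (G.edist y (a : V) + G.edist (a : V) (c : V)) + G.edist (c : V) y' := by
              gcongr; exact SimpleGraph.edist_triangle
          _ ≤ ((s : ℕ∞) + 1) + (s : ℕ∞) := by
              gcongr
              · rw [SimpleGraph.edist_comm]; exact ha
              · exact le_of_eq (SimpleGraph.edist_eq_one_iff_adj.mpr hadj)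
          _ = ((2 * s + 1 : ℕ) : ℕ∞) := by push_cast; ring
      have : y = y' := hceq y hy y' hy' htri
      rw [this]; exact hcy'
  -- reachability to the center
  have hreach : ∀ y, y ∈ Y → ∀ w, G.edist w y ≤ (s : ℕ∞) →
      ∃ (hw : w ∈ L) (hyL : y ∈ L), (G.induce L).Reachable ⟨w, hw⟩ ⟨y, hyL⟩ := by
    intro y hy w h
    have hyL : y ∈ L := hmem y y hy (by rw [SimpleGraph.edist_self]; exact zero_le)
    obtain ⟨hw, hr⟩ := aux_ball_reachable G hyL
      (fun w' h' => hmem w' y hy h') s w h le_rfl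
    exact ⟨hw, hyL, hr⟩
  refine ⟨?_, ?_, ?_⟩
  · -- part 1
    intro v hv
    obtain ⟨y, hy, hvy⟩ := hctr v hv
    refine ⟨y, ⟨hy, ?_⟩, ?_⟩
    · ext w
      simp only [Set.mem_setOf_eq]
      constructor
      · rintro ⟨hw, ⟨p⟩⟩
        exact hclosed y hy p hvy
      · intro hwy
        obtain ⟨hw, hyL, hrw⟩ := hreach y hy w hwy
        obtain ⟨hv', _, hrv⟩ := hreach y hy v hvy
        exact ⟨hw, hrv.trans hrw.symm⟩
    · rintro y' ⟨hy', heq⟩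
      have hvmem : v ∈ {w : V | ∃ hw : w ∈ L,
          (G.induce L).Reachable ⟨v, hv⟩ ⟨w, hw⟩} := ⟨hv, SimpleGraph.Reachable.refl _⟩
      rw [heq] at hvmem
      have hvy' : G.edist v y' ≤ (s : ℕ∞) := hvmem
      have htri : G.edist y' y ≤ ((2 * s + 1 : ℕ) : ℕ∞) := by
        calc G.edist y' y ≤ G.edist y' v + G.edist v y := SimpleGraph.edist_triangle
          _ ≤ (s : ℕ∞) + (s : ℕ∞) := by
              gcongr; rw [SimpleGraph.edist_comm]; exact hvy'
          _ = ((s + s : ℕ) : ℕ∞) := by push_cast; ring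
          _ ≤ ((2 * s + 1 : ℕ) : ℕ∞) := Nat.cast_le.mpr (by omega)
      exact hceq y' hy' y hy htri
  · -- part 2 : diameter bound
    intro v w hr
    obtain ⟨y, hy, hvy⟩ := hctr (v : V) v.2
    obtain ⟨p⟩ := hr
    have hwy := hclosed y hy p hvy
    have htri : G.edist (v : V) (w : V) ≤ ((2 * s : ℕ) : ℕ∞) := by
      calc G.edist (v : V) (w : V) ≤ G.edist (v : V) y + G.edist y (w : V) :=
            SimpleGraph.edist_triangle
        _ ≤ (s : ℕ∞) + (s : ℕ∞) := by
            gcongr; rw [SimpleGraph.edist_comm]; exact hwy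
        _ = ((2 * s : ℕ) : ℕ∞) := by push_cast; ring
    calc 5 * G.edist (v : V) (w : V) ≤ 5 * ((2 * s : ℕ) : ℕ∞) := by gcongr
      _ = ((5 * (2 * s) : ℕ) : ℕ∞) := by push_cast; ring
      _ ≤ ((4 * r' : ℕ) : ℕ∞) := Nat.cast_le.mpr (by omega)
  · -- part 3 : separation
    intro v w hnr
    rcases eq_or_ne (G.edist (v : V) (w : V)) ⊤ with ht | ht
    · simp [ht]
    obtain ⟨d, hd0⟩ := WithTop.ne_top_iff_exists.mp ht
    have hd : G.edist (v : V) (w : V) = ((d : ℕ) : ℕ∞) := hd0.symm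
    obtain ⟨y, hy, hvy⟩ := hctr (v : V) v.2
    obtain ⟨y', hy', hwy⟩ := hctr (w : V) w.2
    have hne : y ≠ y' := by
      rintro rfl
      obtain ⟨hv', hyL, hrv⟩ := hreach y hy (v : V) hvy
      obtain ⟨hw', hyL', hrw⟩ := hreach y hy (w : V) hwy
      exact hnr (hrv.trans hrw.symm)
    have h1 := hdisc y hy y' hy' hne
    have htri : G.edist y y' ≤ ((s + d + s : ℕ) : ℕ∞) := by
      calc G.edist y y' ≤ G.edist y (v : V) + G.edist (v : V) y' :=
            SimpleGraph.edist_triangle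
        _ ≤ G.edist y (v : V) + (G.edist (v : V) (w : V) + G.edist (w : V) y') := by
            gcongr; exact SimpleGraph.edist_triangle
        _ ≤ (s : ℕ∞) + (((d : ℕ) : ℕ∞) + (s : ℕ∞)) := by
            gcongr
            · rw [SimpleGraph.edist_comm]; exact hvy
            · exact le_of_eq hd
        _ = ((s + d + s : ℕ) : ℕ∞) := by push_cast; ring
    have hlt : (r' : ℕ) < s + d + s := by
      have h2 := h1.trans_le htri
      exact_mod_cast h2
    calc ((r' : ℕ) : ℕ∞) ≤ ((5 * d : ℕ) : ℕ∞) := Nat.cast_le.mpr (by omega)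
      _ = 5 * ((d : ℕ) : ℕ∞) := by push_cast; ring
      _ = 5 * G.edist (v : V) (w : V) := by rw [hd]
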